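/- For a valuation matrix v with n agents and degree of degeneracy D(v), in any fractionally Pareto-optimal allocation each pair of distinct agents shares at most D(v)+1 objects; hence the total number of sharings is at most (D(v)+1)·n(n−1)/2. -/

import Mathlib

open Finset

/-- An allocation: nonnegative matrix with column sums 1. -/
def IsAllocation {n m : ℕ} (z : Fin n → Fin m → ℝ) : Prop :=
  (∀ i o, 0 ≤ z i o) ∧ ∀ o, ∑ i, z i o = 1

/-- Additive utility of agent `i` at allocation `z`. -/
def utility {n m : ℕ} (v z : Fin n → Fin m → ℝ) (i : Fin n) : ℝ :=
  ∑ o, v i o * z i o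

/-- Fractional Pareto optimality: no feasible allocation weakly improves everyone
and strictly improves someone. -/
def IsFPO {n m : ℕ} (v z : Fin n → Fin m → ℝ) : Prop :=
  ¬ ∃ y, IsAllocation y ∧ (∀ i, utility v z i ≤ utility v y i) ∧
    ∃ i, utility v z i < utility v y i

/-- Number of sharings of allocation `z`. -/
noncomputable def sharings {n m : ℕ} (z : Fin n → Fin m → ℝ) : ℕ :=
  ∑ o : Fin m, ((Finset.univ.filter (fun i : Fin n => 0 < z i o)).card - 1)

section helpers
variable {n m : ℕ} (v z : Fin n → Fin m → ℝ)

/-- coefficient vector: +1 at i, -1 at j -/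
noncomputable def cf {n : ℕ} (i j : Fin n) : Fin n → ℝ :=
  fun i' => (if i' = i then (1:ℝ) else 0) + (if i' = j then -1 else 0)

lemma cf_sum {n : ℕ} (i j : Fin n) (hij : i ≠ j) : ∑ i', cf i j i' = 0 := by
  simp [cf, Finset.sum_add_distrib, Finset.sum_ite_eq']

lemma cf_i {n : ℕ} (i j : Fin n) (hij : i ≠ j) : cf i j i = 1 := by
  simp [cf, hij]

lemma cf_j {n : ℕ} (i j : Fin n) (hij : i ≠ j) : cf i j j = -1 := by
  simp [cf, hij.symm]

lemma perturb_alloc_sum (i j : Fin n) (hij : i ≠ j) (w : Fin m → ℝ)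
    (hz : IsAllocation z) (o : Fin m) :
    ∑ i', (z i' o + cf i j i' * w o) = 1 := by
  rw [Finset.sum_add_distrib, hz.2, ← Finset.sum_mul, cf_sum i j hij]
  ring

lemma perturb_utility (i j : Fin n) (w : Fin m → ℝ) (i' : Fin n) :
    utility v (fun a b => z a b + cf i j a * w b) i'
      = utility v z i' + cf i j i' * ∑ o, v i' o * w o := by
  simp only [utility, mul_add, Finset.sum_add_distrib, Finset.mul_sum]
  congr 1
  exact Finset.sum_congr rfl fun x _ => by ring

end helpers

lemma lemA {n m : ℕ} (v z : Fin n → Fin m → ℝ) (hz : IsAllocation z) (hfpo : IsFPO v z)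
    (i j : Fin n) (hij : i ≠ j) (o : Fin m) (ho : 0 < z j o)
    (h1 : v j o ≤ 0) (h2 : 0 ≤ v i o) (h3 : v j o < v i o) : False := by
  apply hfpo
  set w : Fin m → ℝ := fun o' => if o' = o then z j o else 0 with hw
  refine ⟨fun a b => z a b + cf i j a * w b, ⟨?_, fun o' => perturb_alloc_sum z i j hij w hz o'⟩, ?_, ?_⟩
  · intro a b
    have hzab := hz.1 a b
    have hzjo := hz.1 j o
    by_cases hb : b = o
    · subst hb
      simp only [hw, if_pos rfl, cf]
      rcases eq_or_ne a i with rfl | hai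
      · simp [hij]; nlinarith
      · rcases eq_or_ne a j with rfl | haj
        · simp [hij.symm, hai]
        · simpa [hai, haj] using hzab
    · simp [hw, hb, hzab]
  · intro i'
    rw [perturb_utility]
    have hsum : ∑ o', v i' o' * w o' = v i' o * z j o := by
      simp [hw, mul_ite, Finset.sum_ite_eq']
    rw [hsum]
    rcases eq_or_ne i' i with rfl | hi
    · rw [cf_i _ _ hij]; nlinarith
    · rcases eq_or_ne i' j with rfl | hj
      · rw [cf_j _ _ hij]; nlinarith
      · simp [cf, hi, hj]
  · rcases lt_or_eq_of_le h2 with h2' | h2'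
    · refine ⟨i, ?_⟩
      rw [perturb_utility]
      have hsum : ∑ o', v i o' * w o' = v i o * z j o := by
        simp [hw, mul_ite, Finset.sum_ite_eq']
      rw [hsum, cf_i _ _ hij]
      nlinarith
    · refine ⟨j, ?_⟩
      rw [perturb_utility]
      have hsum : ∑ o', v j o' * w o' = v j o * z j o := by
        simp [hw, mul_ite, Finset.sum_ite_eq']
      rw [hsum, cf_j _ _ hij]
      have hvj : v j o < 0 := by rw [← h2'] at h3; exact h3
      nlinarith

lemma lemB {n m : ℕ} (v z : Fin n → Fin m → ℝ) (hz : IsAllocation z) (hfpo : IsFPO v z)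
    (i j : Fin n) (hij : i ≠ j) (o1 o2 : Fin m) (ho : o1 ≠ o2)
    (h1 : 0 < z i o1) (h2 : 0 < z j o1) (h3 : 0 < z i o2) (h4 : 0 < z j o2) :
    v i o1 * v j o2 = v i o2 * v j o1 := by
  by_contra hne
  apply hfpo
  set a := v i o1; set b := v i o2; set c := v j o1; set d := v j o2
  have hΔ : a * d - b * c ≠ 0 := fun h => hne (by linarith [sub_eq_zero.mp h])
  set B : ℝ := min (min (z i o1) (z j o1)) (min (z i o2) (z j o2)) with hB
  have hBpos : 0 < B := by positivity
  set K1 : ℝ := (-d - b) / (a * d - b * c) with hK1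
  set K2 : ℝ := (-c - a) / (a * d - b * c) with hK2
  set t : ℝ := B / (1 + |K1| + |K2|) with ht
  have hden : 0 < 1 + |K1| + |K2| := by positivity
  have htpos : 0 < t := div_pos hBpos hden
  set ε : ℝ := K1 * t with hε
  set δ : ℝ := K2 * t with hδ
  have habs1 : |ε| ≤ B := by
    rw [hε, abs_mul, abs_of_pos htpos, ht]
    calc |K1| * (B / (1 + |K1| + |K2|)) ≤ (1 + |K1| + |K2|) * (B / (1 + |K1| + |K2|)) := by
          apply mul_le_mul_of_nonneg_right (by linarith [abs_nonneg K1, abs_nonneg K2]) (by positivity)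
      _ = B := by field_simp
  have habs2 : |δ| ≤ B := by
    rw [hδ, abs_mul, abs_of_pos htpos, ht]
    calc |K2| * (B / (1 + |K1| + |K2|)) ≤ (1 + |K1| + |K2|) * (B / (1 + |K1| + |K2|)) := by
          apply mul_le_mul_of_nonneg_right (by linarith [abs_nonneg K1, abs_nonneg K2]) (by positivity)
      _ = B := by field_simp
  have hεle := (abs_le.mp habs1)
  have hδle := (abs_le.mp habs2)
  have hB1 : B ≤ z i o1 := le_trans (min_le_left _ _) (min_le_left _ _)
  have hB2 : B ≤ z j o1 := le_trans (min_le_left _ _) (min_le_right _ _)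
  have hB3 : B ≤ z i o2 := le_trans (min_le_right _ _) (min_le_left _ _)
  have hB4 : B ≤ z j o2 := le_trans (min_le_right _ _) (min_le_right _ _)
  -- the key linear identities
  have key1 : -ε * a + δ * b = t := by
    rw [hε, hδ, hK1, hK2]
    linear_combination t * mul_inv_cancel₀ hΔ
  have key2 : ε * c - δ * d = t := by
    rw [hε, hδ, hK1, hK2]
    linear_combination t * mul_inv_cancel₀ hΔ
  set w : Fin m → ℝ := fun o' => (if o' = o1 then -ε else 0) + (if o' = o2 then δ else 0) with hw
  refine ⟨fun a' b' => z a' b' + cf i j a' * w b', ⟨?_, fun o' => perturb_alloc_sum z i j hij w hz o'⟩, ?_, ?_⟩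
  · intro p q
    dsimp only
    have hzpq := hz.1 p q
    rcases eq_or_ne p i with rfl | hpi
    · rw [cf_i _ _ hij]
      rcases eq_or_ne q o1 with rfl | hq1
      · simp [hw, ho]; linarith
      · rcases eq_or_ne q o2 with rfl | hq2
        · simp [hw, hq1]; linarith
        · simp [hw, hq1, hq2, hzpq]
    · rcases eq_or_ne p j with rfl | hpj
      · rw [cf_j _ _ hij]
        rcases eq_or_ne q o1 with rfl | hq1
        · simp [hw, ho]; linarith
        · rcases eq_or_ne q o2 with rfl | hq2
          · simp [hw, hq1]; linarith
          · simp [hw, hq1, hq2, hzpq]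
      · simpa [cf, hpi, hpj] using hzpq
  · intro i'
    rw [perturb_utility]
    have hsum : ∑ o', v i' o' * w o' = v i' o1 * (-ε) + v i' o2 * δ := by
      simp [hw, mul_add, mul_ite, Finset.sum_add_distrib, Finset.sum_ite_eq']
    rw [hsum]
    rcases eq_or_ne i' i with rfl | hi
    · rw [cf_i _ _ hij]; nlinarith [key1]
    · rcases eq_or_ne i' j with rfl | hj
      · rw [cf_j _ _ hij]; nlinarith [key2]
      · simp [cf, hi, hj]
  · refine ⟨i, ?_⟩
    rw [perturb_utility]
    have hsum : ∑ o', v i o' * w o' = v i o1 * (-ε) + v i o2 * δ := by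
      simp [hw, mul_add, mul_ite, Finset.sum_add_distrib, Finset.sum_ite_eq']
    rw [hsum, cf_i _ _ hij]
    nlinarith [key1]

lemma sign_lemma {n m : ℕ} (v z : Fin n → Fin m → ℝ) (hz : IsAllocation z) (hfpo : IsFPO v z)
    (i j : Fin n) (hij : i ≠ j) (o : Fin m) (hi : 0 < z i o) (hj : 0 < z j o) :
    0 < v i o * v j o ∨ (v i o = 0 ∧ v j o = 0) := by
  have hA1 : ¬(v j o ≤ 0 ∧ 0 ≤ v i o ∧ v j o < v i o) := fun ⟨a, b, c⟩ =>
    lemA v z hz hfpo i j hij o hj a b c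
  have hA2 : ¬(v i o ≤ 0 ∧ 0 ≤ v j o ∧ v i o < v j o) := fun ⟨a, b, c⟩ =>
    lemA v z hz hfpo j i hij.symm o hi a b c
  rcases lt_trichotomy (v i o) 0 with h | h | h
  · rcases lt_trichotomy (v j o) 0 with h' | h' | h'
    · left; exact mul_pos_of_neg_of_neg h h'
    · exact absurd ⟨le_of_lt h, le_of_eq h'.symm, h' ▸ h⟩ hA2
    · exact absurd ⟨le_of_lt h, le_of_lt h', lt_trans h h'⟩ hA2
  · rcases lt_trichotomy (v j o) 0 with h' | h' | h'
    · exact absurd ⟨le_of_lt h', le_of_eq h.symm, h ▸ h'⟩ hA1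
    · right; exact ⟨h, h'⟩
    · exact absurd ⟨le_of_eq h, le_of_lt h', h ▸ h'⟩ hA2
  · rcases lt_trichotomy (v j o) 0 with h' | h' | h'
    · exact absurd ⟨le_of_lt h', le_of_lt h, lt_trans h' h⟩ hA1
    · exact absurd ⟨le_of_eq h', le_of_lt h, h' ▸ h⟩ hA1
    · left; exact mul_pos h h'

lemma pair_bound {n m : ℕ} (v z : Fin n → Fin m → ℝ) (D : ℕ)
    (hD : ∀ i j : Fin n, i ≠ j → ∀ r : ℝ, 0 < r →
      (Finset.univ.filter (fun o : Fin m => v i o = r * v j o)).card ≤ D + 1)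
    (hz : IsAllocation z) (hfpo : IsFPO v z) (i j : Fin n) (hij : i ≠ j) :
    (Finset.univ.filter (fun o : Fin m => 0 < z i o ∧ 0 < z j o)).card ≤ D + 1 := by
  obtain ⟨r, hr, hrall⟩ : ∃ r : ℝ, 0 < r ∧
      ∀ o : Fin m, 0 < z i o → 0 < z j o → v i o = r * v j o := by
    by_cases hex : ∃ o : Fin m, (0 < z i o ∧ 0 < z j o) ∧ v j o ≠ 0
    · obtain ⟨o0, ⟨hi0, hj0⟩, hv0⟩ := hex
      have hsign := sign_lemma v z hz hfpo i j hij o0 hi0 hj0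
      have hprod : 0 < v i o0 * v j o0 := by
        rcases hsign with h | ⟨_, h⟩
        · exact h
        · exact absurd h hv0
      refine ⟨v i o0 / v j o0, ?_, ?_⟩
      · rcases mul_pos_iff.mp hprod with ⟨h1, h2⟩ | ⟨h1, h2⟩
        · exact div_pos h1 h2
        · exact div_pos_of_neg_of_neg h1 h2
      · intro o hio hjo
        rcases eq_or_ne o o0 with rfl | hne
        · field_simp
        · have hB := lemB v z hz hfpo i j hij o o0 hne hio hjo hi0 hj0
          field_simp
          linarith [hB]
    · push_neg at hex
      refine ⟨1, one_pos, fun o hio hjo => ?_⟩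
      have hvj : v j o = 0 := hex o ⟨hio, hjo⟩
      have hsign := sign_lemma v z hz hfpo i j hij o hio hjo
      rcases hsign with h | ⟨h, _⟩
      · rw [hvj] at h; simp at h
      · rw [h, hvj]; ring
  calc (Finset.univ.filter (fun o : Fin m => 0 < z i o ∧ 0 < z j o)).card
      ≤ (Finset.univ.filter (fun o : Fin m => v i o = r * v j o)).card := by
        apply Finset.card_le_card
        intro o ho
        simp only [Finset.mem_filter, Finset.mem_univ, true_and] at ho ⊢
        exact hrall o ho.1 ho.2
    _ ≤ D + 1 := hD i j hij r hr


/-- With degeneracy degree at most D, in any fPO allocation each pair of agents shares at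
most D+1 objects, and the total number of sharings is at most (D+1)·n(n-1)/2. -/
theorem stmt12 {n m : ℕ} (v z : Fin n → Fin m → ℝ) (D : ℕ)
    (hD : ∀ i j : Fin n, i ≠ j → ∀ r : ℝ, 0 < r →
      (Finset.univ.filter (fun o : Fin m => v i o = r * v j o)).card ≤ D + 1)
    (hz : IsAllocation z) (hfpo : IsFPO v z) :
    (∀ i j : Fin n, i ≠ j →
      (Finset.univ.filter (fun o : Fin m => 0 < z i o ∧ 0 < z j o)).card ≤ D + 1) ∧
    sharings z ≤ (D + 1) * (n * (n - 1) / 2) := by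
  have hpair := fun i j hij => pair_bound v z D hD hz hfpo i j hij
  refine ⟨hpair, ?_⟩
  set A : Fin m → Finset (Fin n) := fun o => Finset.univ.filter (fun i => 0 < z i o) with hA
  have hsum : ∑ o : Fin m, ((A o).offDiag).card ≤ (D + 1) * (n * n - n) := by
    have heq : ∀ o : Fin m, (A o).offDiag
        = (Finset.univ.offDiag : Finset (Fin n × Fin n)).filter
            (fun p => 0 < z p.1 o ∧ 0 < z p.2 o) := by
      intro o
      ext p
      simp only [Finset.mem_offDiag, Finset.mem_filter, Finset.mem_univ, true_and, hA]
      tauto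
    calc ∑ o : Fin m, ((A o).offDiag).card
        = ∑ o : Fin m, ∑ p ∈ (Finset.univ.offDiag : Finset (Fin n × Fin n)),
            if 0 < z p.1 o ∧ 0 < z p.2 o then 1 else 0 := by
          refine Finset.sum_congr rfl fun o _ => ?_
          rw [heq o, Finset.card_filter]
      _ = ∑ p ∈ (Finset.univ.offDiag : Finset (Fin n × Fin n)), ∑ o : Fin m,
            if 0 < z p.1 o ∧ 0 < z p.2 o then 1 else 0 := Finset.sum_comm
      _ ≤ ∑ _p ∈ (Finset.univ.offDiag : Finset (Fin n × Fin n)), (D + 1) := by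
          refine Finset.sum_le_sum fun p hp => ?_
          rw [← Finset.card_filter]
          exact hpair p.1 p.2 (Finset.mem_offDiag.mp hp).2.2
      _ = (Finset.univ.offDiag : Finset (Fin n × Fin n)).card * (D + 1) := by
          rw [Finset.sum_const, smul_eq_mul]
      _ = (n * n - n) * (D + 1) := by rw [Finset.offDiag_card]; simp
      _ = (D + 1) * (n * n - n) := mul_comm _ _
  have h2 : 2 * sharings z ≤ (D + 1) * (n * n - n) := by
    rw [sharings, Finset.mul_sum]
    refine le_trans (Finset.sum_le_sum fun o _ => ?_) hsum
    rw [Finset.offDiag_card]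
    rcases hk : (A o).card with _ | s
    · simp
    · have h1 : (s + 1) * (s + 1) - (s + 1) = s * (s + 1) := by
        rw [Nat.succ_mul, Nat.add_sub_cancel]
      rw [h1, Nat.add_sub_cancel]
      nlinarith
  have hEv : Even (n * (n - 1)) := by
    rcases Nat.even_or_odd n with h | h
    · exact h.mul_right _
    · exact (Nat.Odd.sub_odd h odd_one).mul_left _
  have hnn : n * n - n = n * (n - 1) := (Nat.mul_sub_one n n ▸ rfl : n * (n - 1) = n * n - n).symm
  rw [← Nat.mul_div_assoc (D + 1) hEv.two_dvd]
  rw [Nat.le_div_iff_mul_le (by norm_num : 0 < 2)]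
  rw [mul_comm (sharings z) 2, ← hnn]
  exact h2
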